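/- Let a > b > 0 and let P₁ = (x₁, y₁), P₂ = (−a⁴y₁, b⁴x₁)/√(b⁶x₁² + a⁶y₁²), P₃ = −P₁, P₄ = −P₂ be a simple billiard 4-periodic in the ellipse x²/a² + y²/b² = 1. The outer polygon, whose vertices are the intersections of consecutive tangent lines to the ellipse at P₁, …, P₄, is a rectangle; consequently the sum of cos(2θᵢ') over its four interior angles θᵢ' equals −4, and the product ∏ cos θᵢ' equals 0. -/

import Mathlib

/-- `q` lies on the tangent line to the ellipse `x²/a² + y²/b² = 1` at the point
`p` of the ellipse. -/
def OnTangentLine (a b : ℝ) (p q : ℝ × ℝ) : Prop :=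
  q.1 * p.1 / a^2 + q.2 * p.2 / b^2 = 1

/-- Dot product of the vectors `B → A` and `B → C`. -/
def dotAt (A B C : ℝ × ℝ) : ℝ :=
  (A.1 - B.1)*(C.1 - B.1) + (A.2 - B.2)*(C.2 - B.2)

/-- Interior angle at `B` of the path `A-B-C`. -/
noncomputable def ang (A B C : ℝ × ℝ) : ℝ :=
  Real.arccos (dotAt A B C /
    (Real.sqrt ((A.1 - B.1)^2 + (A.2 - B.2)^2) *
     Real.sqrt ((C.1 - B.1)^2 + (C.2 - B.2)^2)))

lemma ang_of_dot_zero (A B C : ℝ × ℝ) (h : dotAt A B C = 0) :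
    ang A B C = Real.pi / 2 := by
  rw [ang, h, zero_div, Real.arccos_zero]

/-- The outer polygon of a simple billiard 4-periodic is a rectangle; hence the
sum of `cos(2θᵢ')` over its four interior angles is `−4` and the product of
`cos θᵢ'` is `0`. -/
theorem simple_4periodic_outer_rectangle (a b x₁ y₁ : ℝ) (hab : a > b)
    (hb : b > 0) (hP1 : (x₁/a)^2 + (y₁/b)^2 = 1) (Q1 Q2 Q3 Q4 : ℝ × ℝ) :
    let q := Real.sqrt (b^6*x₁^2 + a^6*y₁^2)
    let P1 : ℝ × ℝ := (x₁, y₁)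
    let P2 : ℝ × ℝ := (-(a^4*y₁)/q, (b^4*x₁)/q)
    let P3 : ℝ × ℝ := (-x₁, -y₁)
    let P4 : ℝ × ℝ := ((a^4*y₁)/q, -(b^4*x₁)/q)
    OnTangentLine a b P1 Q1 → OnTangentLine a b P2 Q1 →
    OnTangentLine a b P2 Q2 → OnTangentLine a b P3 Q2 →
    OnTangentLine a b P3 Q3 → OnTangentLine a b P4 Q3 →
    OnTangentLine a b P4 Q4 → OnTangentLine a b P1 Q4 →
    let θ₁ := ang Q4 Q1 Q2
    let θ₂ := ang Q1 Q2 Q3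
    let θ₃ := ang Q2 Q3 Q4
    let θ₄ := ang Q3 Q4 Q1
    -- the outer polygon is a rectangle: adjacent sides are orthogonal
    (dotAt Q4 Q1 Q2 = 0 ∧ dotAt Q1 Q2 Q3 = 0 ∧
     dotAt Q2 Q3 Q4 = 0 ∧ dotAt Q3 Q4 Q1 = 0) ∧
    Real.cos (2*θ₁) + Real.cos (2*θ₂) + Real.cos (2*θ₃) + Real.cos (2*θ₄) = -4 ∧
    Real.cos θ₁ * Real.cos θ₂ * Real.cos θ₃ * Real.cos θ₄ = 0 := by
  intro q P1 P2 P3 P4 h1 h2 h3 h4 h5 h6 h7 h8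
  have ha : a > 0 := lt_trans hb hab
  have ha0 : a ≠ 0 := ne_of_gt ha
  have hb0 : b ≠ 0 := ne_of_gt hb
  have hne : x₁ ≠ 0 ∨ y₁ ≠ 0 := by
    by_contra h
    push_neg at h
    rw [h.1, h.2] at hP1
    norm_num at hP1
  have hxy : b^6*x₁^2 + a^6*y₁^2 > 0 := by
    rcases hne with hx | hy
    · positivity
    · positivity
  have hqpos : q > 0 := Real.sqrt_pos.mpr hxy
  have hq0 : q ≠ 0 := ne_of_gt hqpos
  have hq2 : q^2 = b^6*x₁^2 + a^6*y₁^2 := Real.sq_sqrt hxy.le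
  have hD : b^4*x₁^2 + a^4*y₁^2 > 0 := by
    rcases hne with hx | hy
    · positivity
    · positivity
  have hD0 : b^4*x₁^2 + a^4*y₁^2 ≠ 0 := ne_of_gt hD
  -- turn the tangent conditions into polynomial equations
  simp only [OnTangentLine, P1, P2, P3, P4] at h1 h2 h3 h4 h5 h6 h7 h8
  have E1 : Q1.1*x₁*b^2 + Q1.2*y₁*a^2 = a^2*b^2 := by
    field_simp at h1; linarith
  have E2 : -(a^2*y₁)*Q1.1 + b^2*x₁*Q1.2 = q := by
    field_simp at h2
    exact mul_right_cancel₀ (mul_ne_zero (mul_ne_zero (pow_ne_zero 2 ha0) (pow_ne_zero 2 hb0)) hq0)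
      (by linear_combination (a^2*b^2*q) * h2 : (-(a^2*y₁)*Q1.1 + b^2*x₁*Q1.2) * (a^2*b^2*q) = q * (a^2*b^2*q))
  have E3 : -(a^2*y₁)*Q2.1 + b^2*x₁*Q2.2 = q := by
    field_simp at h3
    exact mul_right_cancel₀ (mul_ne_zero (mul_ne_zero (pow_ne_zero 2 ha0) (pow_ne_zero 2 hb0)) hq0)
      (by linear_combination (a^2*b^2*q) * h3 : (-(a^2*y₁)*Q2.1 + b^2*x₁*Q2.2) * (a^2*b^2*q) = q * (a^2*b^2*q))
  have E4 : -(Q2.1*x₁*b^2) - Q2.2*y₁*a^2 = a^2*b^2 := by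
    field_simp at h4; linarith
  have E5 : -(Q3.1*x₁*b^2) - Q3.2*y₁*a^2 = a^2*b^2 := by
    field_simp at h5; linarith
  have E6 : a^2*y₁*Q3.1 - b^2*x₁*Q3.2 = q := by
    field_simp at h6
    exact mul_right_cancel₀ (mul_ne_zero (mul_ne_zero (pow_ne_zero 2 ha0) (pow_ne_zero 2 hb0)) hq0)
      (by linear_combination (a^2*b^2*q) * h6 : (a^2*y₁*Q3.1 - b^2*x₁*Q3.2) * (a^2*b^2*q) = q * (a^2*b^2*q))
  have E7 : a^2*y₁*Q4.1 - b^2*x₁*Q4.2 = q := by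
    field_simp at h7
    exact mul_right_cancel₀ (mul_ne_zero (mul_ne_zero (pow_ne_zero 2 ha0) (pow_ne_zero 2 hb0)) hq0)
      (by linear_combination (a^2*b^2*q) * h7 : (a^2*y₁*Q4.1 - b^2*x₁*Q4.2) * (a^2*b^2*q) = q * (a^2*b^2*q))
  have E8 : Q4.1*x₁*b^2 + Q4.2*y₁*a^2 = a^2*b^2 := by
    field_simp at h8; linarith
  -- Q3 = -Q1, Q4 = -Q2
  have h31 : Q3.1 = -Q1.1 := by
    have h : (Q1.1 + Q3.1) * (b^4*x₁^2 + a^4*y₁^2) = 0 := by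
      linear_combination b^2*x₁*E1 - b^2*x₁*E5 - a^2*y₁*E2 + a^2*y₁*E6
    have := (mul_eq_zero.mp h).resolve_right hD0
    linarith
  have h32 : Q3.2 = -Q1.2 := by
    have h : (Q1.2 + Q3.2) * (b^4*x₁^2 + a^4*y₁^2) = 0 := by
      linear_combination a^2*y₁*E1 - a^2*y₁*E5 + b^2*x₁*E2 - b^2*x₁*E6
    have := (mul_eq_zero.mp h).resolve_right hD0
    linarith
  have h41 : Q4.1 = -Q2.1 := by
    have h : (Q2.1 + Q4.1) * (b^4*x₁^2 + a^4*y₁^2) = 0 := by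
      linear_combination b^2*x₁*E8 - b^2*x₁*E4 + a^2*y₁*E7 - a^2*y₁*E3
    have := (mul_eq_zero.mp h).resolve_right hD0
    linarith
  have h42 : Q4.2 = -Q2.2 := by
    have h : (Q2.2 + Q4.2) * (b^4*x₁^2 + a^4*y₁^2) = 0 := by
      linear_combination a^2*y₁*E8 - a^2*y₁*E4 - b^2*x₁*E7 + b^2*x₁*E3
    have := (mul_eq_zero.mp h).resolve_right hD0
    linarith
  -- explicit solutions (times the determinant)
  have hu1 : Q1.1 * (b^4*x₁^2 + a^4*y₁^2) = a^2*(b^4*x₁ - q*y₁) := by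
    linear_combination b^2*x₁*E1 - a^2*y₁*E2
  have hv1 : Q1.2 * (b^4*x₁^2 + a^4*y₁^2) = b^2*(q*x₁ + a^4*y₁) := by
    linear_combination a^2*y₁*E1 + b^2*x₁*E2
  have hu2 : Q2.1 * (b^4*x₁^2 + a^4*y₁^2) = -(a^2*(q*y₁ + b^4*x₁)) := by
    linear_combination -(a^2*y₁)*E3 - b^2*x₁*E4
  have hv2 : Q2.2 * (b^4*x₁^2 + a^4*y₁^2) = b^2*(q*x₁ - a^4*y₁) := by
    linear_combination b^2*x₁*E3 - a^2*y₁*E4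
  -- |Q1|² = |Q2|²
  have hS : (Q1.1^2 + Q1.2^2 - Q2.1^2 - Q2.2^2) * (b^4*x₁^2 + a^4*y₁^2)^2 = 0 := by
    linear_combination (Q1.1*(b^4*x₁^2 + a^4*y₁^2) + a^2*(b^4*x₁ - q*y₁)) * hu1
      + (Q1.2*(b^4*x₁^2 + a^4*y₁^2) + b^2*(q*x₁ + a^4*y₁)) * hv1
      - (Q2.1*(b^4*x₁^2 + a^4*y₁^2) - a^2*(q*y₁ + b^4*x₁)) * hu2
      - (Q2.2*(b^4*x₁^2 + a^4*y₁^2) + b^2*(q*x₁ - a^4*y₁)) * hv2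
  have hS0 : Q1.1^2 + Q1.2^2 - Q2.1^2 - Q2.2^2 = 0 :=
    (mul_eq_zero.mp hS).resolve_right (pow_ne_zero 2 hD0)
  have d1 : dotAt Q4 Q1 Q2 = 0 := by
    rw [dotAt, h41, h42]; linear_combination hS0
  have d2 : dotAt Q1 Q2 Q3 = 0 := by
    rw [dotAt, h31, h32]; linear_combination -hS0
  have d3 : dotAt Q2 Q3 Q4 = 0 := by
    rw [dotAt, h31, h32, h41, h42]; linear_combination hS0
  have d4 : dotAt Q3 Q4 Q1 = 0 := by
    rw [dotAt, h31, h32, h41, h42]; linear_combination -hS0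
  intro θ₁ θ₂ θ₃ θ₄
  have e1 : θ₁ = Real.pi/2 := ang_of_dot_zero _ _ _ d1
  have e2 : θ₂ = Real.pi/2 := ang_of_dot_zero _ _ _ d2
  have e3 : θ₃ = Real.pi/2 := ang_of_dot_zero _ _ _ d3
  have e4 : θ₄ = Real.pi/2 := ang_of_dot_zero _ _ _ d4
  refine ⟨⟨d1, d2, d3, d4⟩, ?_, ?_⟩
  · rw [e1, e2, e3, e4]
    have : 2 * (Real.pi/2) = Real.pi := by ring
    rw [this, Real.cos_pi]; norm_num
  · rw [e1, Real.cos_pi_div_two]; ring
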